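/- Let g : ℝ → M be defined by g(t) = φ_t(p) for t ≤ 0 and g(t) = φ_t(q) for t > 0, where (φ_t) is a flow on a metric space M whose time-τ maps for τ ∈ [0,1] are L-Lipschitz (L ≥ 1). If dist(φ_t(p), φ_t(q)) < d/(L+1) for all t ∈ [-1, 1], then g is a d-pseudo orbit. -/
import Mathlib

/-- Concatenating the negative orbit of p with the positive orbit of q, with the two
orbits d/(L+1)-close on [-1,1], yields a d-pseudo orbit. -/
theorem stmt_17 {M : Type*} [MetricSpace M] (φ : ℝ → M → M)
    (hφ0 : ∀ x, φ 0 x = x) (hφadd : ∀ t s x, φ (t + s) x = φ t (φ s x))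
    (L : ℝ) (hL : 1 ≤ L)
    (hLip : ∀ τ ∈ Set.Icc (0 : ℝ) 1, ∀ x y : M, dist (φ τ x) (φ τ y) ≤ L * dist x y)
    (p q : M) (d : ℝ) (hd : 0 < d) (g : ℝ → M)
    (hg₁ : ∀ t : ℝ, t ≤ 0 → g t = φ t p) (hg₂ : ∀ t : ℝ, 0 < t → g t = φ t q)
    (hclose : ∀ t ∈ Set.Icc (-1 : ℝ) 1, dist (φ t p) (φ t q) < d / (L + 1)) :
    ∀ t τ : ℝ, τ ∈ Set.Icc (0 : ℝ) 1 → dist (g (t + τ)) (φ τ (g t)) < d := by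
  intro t τ hτ
  obtain ⟨hτ0, hτ1⟩ := hτ
  rcases le_or_gt t 0 with ht | ht
  · rw [hg₁ t ht]
    rcases le_or_gt (t + τ) 0 with hs | hs
    · rw [hg₁ _ hs, add_comm, hφadd, dist_self]; exact hd
    · rw [hg₂ _ hs, ← hφadd, add_comm τ t]
      have h1 : t + τ ∈ Set.Icc (-1 : ℝ) 1 := ⟨by linarith, by linarith⟩
      have := hclose _ h1
      rw [dist_comm]
      calc dist (φ (t+τ) p) (φ (t+τ) q) < d / (L + 1) := this
        _ ≤ d := by
          rw [div_le_iff₀ (by linarith)]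
          nlinarith
  · rw [hg₂ t ht, hg₂ _ (by linarith), add_comm, hφadd, dist_self]
    exact hd
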